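/- Let E be a Banach space and M₁, M₂ : E → E commuting continuous linear maps, both commuting with a continuous linear map A : E → E. A function f : ℝ → E satisfies f'(t) = (A + M₁) f(t) for all t if and only if the function g(t) = exp(t M₂) (exp(-t M₁) (f(t))) satisfies g'(t) = (A + M₂) g(t) for all t. -/

import Mathlib

set_option maxHeartbeats 1000000
set_option synthInstance.maxHeartbeats 400000

open NormedSpace

private lemma exp_inv_apply {E : Type*} [NormedAddCommGroup E] [NormedSpace ℝ E]
    [CompleteSpace E] (M : E →L[ℝ] E) (s : ℝ) (x : E) :
    exp (s • M) (exp ((-s) • M) x) = x := by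
  have h : exp (s • M) * exp ((-s) • M) = 1 := by
    letI : NormedAlgebra ℚ (E →L[ℝ] E) := NormedAlgebra.restrictScalars ℚ ℝ _
    rw [← exp_add_of_commute (((Commute.refl M).smul_left s).smul_right (-s))]
    have : s • M + (-s) • M = 0 := by module
    rw [this, exp_zero]
  calc exp (s • M) (exp ((-s) • M) x)
      = (exp (s • M) * exp ((-s) • M)) x := rfl
    _ = x := by rw [h]; rfl

private lemma key {E : Type*} [NormedAddCommGroup E] [NormedSpace ℝ E] [CompleteSpace E]
    (A M₁ M₂ : E →L[ℝ] E)
    (h12 : Commute M₁ M₂) (hA1 : Commute A M₁) (hA2 : Commute A M₂)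
    (f : ℝ → E)
    (hf : ∀ t : ℝ, HasDerivAt f ((A + M₁) (f t)) t) (t : ℝ) :
    HasDerivAt (fun s => exp (s • M₂) (exp ((-s) • M₁) (f s)))
      ((A + M₂) (exp (t • M₂) (exp ((-t) • M₁) (f t)))) t := by
  set e₁ := exp ((-t) • M₁) with he₁
  set e₂ := exp (t • M₂) with he₂
  have h1 : HasDerivAt (fun s : ℝ => exp ((-s) • M₁)) (-(e₁ * M₁)) t := by
    have := (hasDerivAt_exp_smul_const (𝕂 := ℝ) M₁ (-t)).scomp t (hasDerivAt_neg t)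
    simpa [Function.comp_def, he₁] using this
  have hinner := h1.clm_apply (hf t)
  have h2 : HasDerivAt (fun s : ℝ => exp (s • M₂)) (e₂ * M₂) t :=
    hasDerivAt_exp_smul_const (𝕂 := ℝ) M₂ t
  have hg := h2.clm_apply hinner
  convert hg using 1
  -- operator-level commutation facts
  have hM2e1 : Commute M₂ e₁ := ((h12.symm.smul_right (-t)).exp_right)
  have hAe1 : Commute A e₁ := ((hA1.smul_right (-t)).exp_right)
  have hAe2 : Commute A e₂ := ((hA2.smul_right t).exp_right)
  have hM2e2 : Commute M₂ e₂ := (((Commute.refl M₂).smul_right t).exp_right)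
  have hop : (A + M₂) * (e₂ * e₁) =
      (e₂ * M₂) * e₁ + (e₂ * (-(e₁ * M₁) + e₁ * (A + M₁))) := by
    have c1 : e₂ * M₂ = M₂ * e₂ := hM2e2.eq.symm
    have c2 : e₁ * A = A * e₁ := hAe1.eq.symm
    have c3 : e₂ * A = A * e₂ := hAe2.eq.symm
    rw [mul_add, mul_add, mul_add, c1, c2]
    have h4 : -(e₂ * (e₁ * M₁)) + (e₂ * (A * e₁) + e₂ * (e₁ * M₁)) = e₂ * (A * e₁) := by abel
    rw [mul_neg, h4, ← mul_assoc e₂ A e₁, c3, add_mul]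
    noncomm_ring
  calc (A + M₂) (e₂ (e₁ (f t))) = ((A + M₂) * (e₂ * e₁)) (f t) := rfl
    _ = ((e₂ * M₂) * e₁ + (e₂ * (-(e₁ * M₁) + e₁ * (A + M₁)))) (f t) := by rw [hop]
    _ = (e₂ * M₂) (e₁ (f t)) + e₂ ((-(e₁ * M₁)) (f t) + e₁ ((A + M₁) (f t))) := by
        simp [ContinuousLinearMap.add_apply, ContinuousLinearMap.mul_apply]

/-- `f' = (A + M₁) f` iff `g(t) = exp(tM₂)(exp(-tM₁)(f t))`
satisfies `g' = (A + M₂) g`, for pairwise commuting bounded operators. -/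
theorem stmt1 {E : Type*} [NormedAddCommGroup E] [NormedSpace ℝ E] [CompleteSpace E]
    (A M₁ M₂ : E →L[ℝ] E)
    (h12 : M₁ ∘L M₂ = M₂ ∘L M₁) (hA1 : A ∘L M₁ = M₁ ∘L A) (hA2 : A ∘L M₂ = M₂ ∘L A)
    (f : ℝ → E) (hf : Differentiable ℝ f) :
    (∀ t : ℝ, HasDerivAt f ((A + M₁) (f t)) t) ↔
    (∀ t : ℝ, HasDerivAt
      (fun s => NormedSpace.exp (s • M₂) (NormedSpace.exp ((-s) • M₁) (f s)))
      ((A + M₂) (NormedSpace.exp (t • M₂) (NormedSpace.exp ((-t) • M₁) (f t)))) t) := by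
  have c12 : Commute M₁ M₂ := h12
  have cA1 : Commute A M₁ := hA1
  have cA2 : Commute A M₂ := hA2
  constructor
  · intro h t
    exact key A M₁ M₂ c12 cA1 cA2 f h t
  · intro h t
    have hk := key A M₂ M₁ c12.symm cA2 cA1
      (fun s => exp (s • M₂) (exp ((-s) • M₁) (f s))) h t
    have hfun : (fun s => exp (s • M₁)
        (exp ((-s) • M₂) (exp (s • M₂) (exp ((-s) • M₁) (f s))))) = f := by
      funext s
      rw [show exp ((-s) • M₂) (exp (s • M₂) (exp ((-s) • M₁) (f s)))
          = exp ((-s) • M₂) (exp (-(-s) • M₂) (exp ((-s) • M₁) (f s))) by rw [neg_neg],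
        exp_inv_apply, show (s : ℝ) = -(-s) by ring, exp_inv_apply]
    rw [hfun] at hk
    convert hk using 2
    rw [show exp ((-t) • M₂) (exp (t • M₂) (exp ((-t) • M₁) (f t)))
        = exp ((-t) • M₂) (exp (-(-t) • M₂) (exp ((-t) • M₁) (f t))) by rw [neg_neg],
      exp_inv_apply]
    exact (exp_inv_apply M₁ t (f t)).symm
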